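/- Let E ⊂ ℝ^d be measurable with positive finite measure, and let f, v : E → ℝ be such that f is integrable with values in ℝ^n, v is integrable real-valued, and ∫_E ξ(x)v(x) dx ≥ 0 for every measurable ξ : E → [-1,1] with ∫_E ξ(x)f(x) dx = 0. Then there exists λ ∈ ℝ^n such that v(x) = λ·f(x) for almost every x ∈ E. -/

import Mathlib

open MeasureTheory

section Aux

variable {d n : ℕ} {E : Set (Fin d → ℝ)}

/-- The submodule of bounded measurable functions. -/
def BM (d : ℕ) : Submodule ℝ ((Fin d → ℝ) → ℝ) where
  carrier := {ξ | Measurable ξ ∧ ∃ C : ℝ, ∀ x, |ξ x| ≤ C}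
  add_mem' := by
    rintro a b ⟨ha, Ca, hCa⟩ ⟨hb, Cb, hCb⟩
    exact ⟨ha.add hb, Ca + Cb, fun x => (abs_add_le _ _).trans (add_le_add (hCa x) (hCb x))⟩
  zero_mem' := ⟨measurable_const, 0, fun x => by simp⟩
  smul_mem' := by
    rintro c a ⟨ha, Ca, hCa⟩
    refine ⟨ha.const_smul c, |c| * Ca, fun x => ?_⟩
    simp only [Pi.smul_apply, smul_eq_mul, abs_mul]
    exact mul_le_mul_of_nonneg_left (hCa x) (abs_nonneg c)

lemma BM.integrable {w : (Fin d → ℝ) → ℝ} (hw : IntegrableOn w E)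
    (ξ : BM d) : IntegrableOn (fun x => (ξ : (Fin d → ℝ) → ℝ) x * w x) E := by
  obtain ⟨hmeas, C, hC⟩ := ξ.2
  exact hw.bdd_mul hmeas.aestronglyMeasurable (c := C) (Filter.Eventually.of_forall fun x => by simpa using hC x)

/-- Integration against an integrable weight, as a linear map on bounded measurable
functions. -/
noncomputable def intLM {w : (Fin d → ℝ) → ℝ} (hw : IntegrableOn w E) :
    BM d →ₗ[ℝ] ℝ where
  toFun ξ := ∫ x in E, (ξ : (Fin d → ℝ) → ℝ) x * w x
  map_add' ξ η := by
    rw [← integral_add (BM.integrable hw ξ) (BM.integrable hw η)]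
    simp [add_mul]
  map_smul' c ξ := by
    simp only [RingHom.id_apply, smul_eq_mul, Submodule.coe_smul, Pi.smul_apply]
    simp_rw [mul_assoc]
    exact integral_const_mul _ _

end Aux

/-- Lagrange multiplier lemma: if `ξ ≡ 0` minimizes `∫_E ξ v` over measurable `ξ : E → [-1,1]`
with `∫_E ξ f = 0`, then `v = λ · f` a.e. on `E` for some `λ ∈ ℝ^n`. -/
theorem stmt9 (d n : ℕ) (E : Set (Fin d → ℝ)) (hE : MeasurableSet E)
    (hpos : 0 < volume E) (hfin : volume E < ⊤)
    (f : (Fin d → ℝ) → Fin n → ℝ) (hf : IntegrableOn f E)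
    (v : (Fin d → ℝ) → ℝ) (hv : IntegrableOn v E)
    (hmin : ∀ ξ : (Fin d → ℝ) → ℝ, Measurable ξ → (∀ x, ξ x ∈ Set.Icc (-1 : ℝ) 1) →
      (∫ x in E, ξ x • f x) = 0 → 0 ≤ ∫ x in E, ξ x * v x) :
    ∃ lam : Fin n → ℝ, ∀ᵐ x ∂volume.restrict E, v x = ∑ j, lam j * f x j := by
  -- integrability of components of f
  have hfj : ∀ j, IntegrableOn (fun x => f x j) E := fun j =>
    (ContinuousLinearMap.proj (R := ℝ) (φ := fun _ : Fin n => ℝ) j).integrable_comp hf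
  -- the linear maps
  set L : Fin n → (BM d →ₗ[ℝ] ℝ) := fun j => intLM (hfj j) with hL
  set K : BM d →ₗ[ℝ] ℝ := intLM hv with hK
  -- symmetrized minimality: the kernel condition
  have hker : ⨅ j, LinearMap.ker (L j) ≤ LinearMap.ker K := by
    intro ξ hξ
    obtain ⟨hmeas, C, hC⟩ := ξ.2
    have hC0 : (0 : ℝ) < C + 1 := by
      have := (abs_nonneg _).trans (hC (fun _ => 0)); linarith
    simp only [Submodule.mem_iInf, LinearMap.mem_ker] at hξ ⊢
    -- integrability of ξ • f
    have hint : IntegrableOn (fun x => (ξ : (Fin d → ℝ) → ℝ) x • f x) E := by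
      refine Integrable.mono' (hf.norm.const_mul C)
        (hmeas.aestronglyMeasurable.smul hf.aestronglyMeasurable) ?_
      filter_upwards with x
      rw [norm_smul]
      exact mul_le_mul_of_nonneg_right (by simpa using hC x) (norm_nonneg _)
    -- the vector integral of ξ • f vanishes
    have hvec : (∫ x in E, (ξ : (Fin d → ℝ) → ℝ) x • f x) = 0 := by
      funext j
      have := (ContinuousLinearMap.proj (R := ℝ) (φ := fun _ : Fin n => ℝ) j).integral_comp_comm hint
      simp only [ContinuousLinearMap.proj_apply, Pi.smul_apply, smul_eq_mul] at this
      have hj := hξ j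
      simp only [hL, intLM, LinearMap.coe_mk, AddHom.coe_mk] at hj
      rw [Pi.zero_apply, ← this, hj]
    -- scaled admissible functions
    set c : ℝ := (C + 1)⁻¹ with hc
    have hc0 : 0 < c := inv_pos.2 hC0
    have key : ∀ s : ℝ, |s| = 1 →
        (0:ℝ) ≤ (s * c) * ∫ x in E, (ξ : (Fin d → ℝ) → ℝ) x * v x := by
      intro s hs
      have hmeas' : Measurable (fun x => (s * c) * (ξ : (Fin d → ℝ) → ℝ) x) :=
        hmeas.const_mul (s * c)
      have hicc : ∀ x, (s * c) * (ξ : (Fin d → ℝ) → ℝ) x ∈ Set.Icc (-1 : ℝ) 1 := by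
        intro x
        rw [Set.mem_Icc, ← abs_le, abs_mul, abs_mul, hs, one_mul, abs_of_pos hc0]
        rw [hc, inv_mul_le_iff₀ hC0, mul_one]
        exact (hC x).trans (by linarith)
      have hzero : (∫ x in E, ((s * c) * (ξ : (Fin d → ℝ) → ℝ) x) • f x) = 0 := by
        have heq : (fun x => ((s * c) * (ξ : (Fin d → ℝ) → ℝ) x) • f x)
            = fun x => (s * c) • ((ξ : (Fin d → ℝ) → ℝ) x • f x) := by
          funext x; rw [smul_smul]
        rw [heq, integral_smul, hvec, smul_zero]
      have h0 := hmin _ hmeas' hicc hzero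
      calc (0:ℝ) ≤ ∫ x in E, ((s * c) * (ξ : (Fin d → ℝ) → ℝ) x) * v x := h0
        _ = (s * c) * ∫ x in E, (ξ : (Fin d → ℝ) → ℝ) x * v x := by
            simp_rw [mul_assoc]; rw [integral_const_mul s, integral_const_mul c]
    have h1 := key 1 (by norm_num)
    have h2 := key (-1) (by norm_num)
    have hIv : (∫ x in E, (ξ : (Fin d → ℝ) → ℝ) x * v x) = 0 := by
      rw [one_mul] at h1
      rw [neg_one_mul, neg_mul] at h2
      nlinarith [hc0]
    simp only [hK, intLM, LinearMap.coe_mk, AddHom.coe_mk]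
    exact hIv
  -- K lies in the span of the L j
  obtain ⟨lam, hlam⟩ := (Submodule.mem_span_range_iff_exists_fun ℝ).1 (mem_span_of_iInf_ker_le_ker hker)
  refine ⟨lam, ?_⟩
  -- measurable representatives
  set v' := hv.aestronglyMeasurable.mk v with hv'def
  have hv'meas : Measurable v' := hv.aestronglyMeasurable.stronglyMeasurable_mk.measurable
  have hvv' : v =ᵐ[volume.restrict E] v' := hv.aestronglyMeasurable.ae_eq_mk
  set f' := hf.aestronglyMeasurable.mk f with hf'def
  have hf'meas : Measurable f' := hf.aestronglyMeasurable.stronglyMeasurable_mk.measurable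
  have hff' : f =ᵐ[volume.restrict E] f' := hf.aestronglyMeasurable.ae_eq_mk
  set h : (Fin d → ℝ) → ℝ := fun x => v' x - ∑ j, lam j * f' x j with hhdef
  have hhmeas : Measurable h := by
    apply hv'meas.sub
    exact Finset.measurable_sum _ (fun j _ =>
      ((measurable_pi_apply j).comp hf'meas).const_mul (lam j))
  set ξ0 : (Fin d → ℝ) → ℝ := fun x => if 0 ≤ h x then 1 else -1 with hξ0def
  have hξ0meas : Measurable ξ0 :=
    Measurable.ite (measurableSet_le measurable_const hhmeas) measurable_const measurable_const
  have hξ0mem : ξ0 ∈ BM d := ⟨hξ0meas, 1, fun x => by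
    simp only [hξ0def]; split_ifs <;> norm_num⟩
  -- evaluate the span identity at ξ0
  have hKξ : K ⟨ξ0, hξ0mem⟩ = ∑ j, lam j * L j ⟨ξ0, hξ0mem⟩ := by
    have := LinearMap.congr_fun hlam ⟨ξ0, hξ0mem⟩
    simpa using this.symm
  have hIv : (∫ x in E, ξ0 x * v x) = ∑ j, lam j * ∫ x in E, ξ0 x * f x j := by
    simpa only [hK, hL, intLM, LinearMap.coe_mk, AddHom.coe_mk] using hKξ
  -- the function g
  set g : (Fin d → ℝ) → ℝ := fun x => v x - ∑ j, lam j * f x j with hgdef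
  have hsumint : IntegrableOn (fun x => ∑ j, lam j * f x j) E :=
    integrable_finset_sum _ (fun j _ => ((hfj j).const_mul (lam j)))
  have hg : IntegrableOn g E := hv.sub hsumint
  have hintsum : (∫ x in E, ξ0 x * ∑ j, lam j * f x j)
      = ∑ j, lam j * ∫ x in E, ξ0 x * f x j := by
    have h1 : ∀ j : Fin n, lam j * ∫ x in E, ξ0 x * f x j
        = ∫ x in E, lam j * (ξ0 x * f x j) := fun j => (integral_const_mul _ _).symm
    simp_rw [h1]
    rw [← integral_finset_sum _
      (fun j _ => ((BM.integrable (hfj j) ⟨ξ0, hξ0mem⟩).const_mul (lam j)))]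
    refine integral_congr_ae (Filter.Eventually.of_forall fun x => ?_)
    dsimp only
    rw [Finset.mul_sum]
    exact Finset.sum_congr rfl fun j _ => by ring
  have hzero : (∫ x in E, ξ0 x * g x) = 0 := by
    have hsub : (fun x => ξ0 x * g x)
        = fun x => ξ0 x * v x - ξ0 x * ∑ j, lam j * f x j := by
      funext x; simp only [hgdef]; ring
    rw [hsub, integral_sub (BM.integrable hv ⟨ξ0, hξ0mem⟩) (BM.integrable hsumint ⟨ξ0, hξ0mem⟩),
      hintsum, hIv, sub_self]
  -- ξ0 * g = |g| a.e.
  have habs : (fun x => ξ0 x * g x) =ᵐ[volume.restrict E] fun x => |g x| := by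
    filter_upwards [hvv', hff'] with x hvx hfx
    have hgh : g x = h x := by
      simp only [hgdef, hhdef, hvx, hfx]
    simp only [hξ0def, hgh]
    split_ifs with hle
    · rw [one_mul, abs_of_nonneg hle]
    · rw [neg_one_mul, abs_of_neg (lt_of_not_ge hle)]
  have habs0 : (∫ x in E, |g x|) = 0 := by
    rw [← integral_congr_ae habs, hzero]
  have hgz : (fun x => |g x|) =ᵐ[volume.restrict E] 0 := by
    refine (integral_eq_zero_iff_of_nonneg_ae ?_ hg.abs).1 habs0
    filter_upwards with x using abs_nonneg _
  filter_upwards [hgz] with x hx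
  have : |g x| = 0 := hx
  have : g x = 0 := abs_eq_zero.1 this
  simp only [hgdef] at this
  linarith
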